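/- If A is a polynomial in the coefficients a_0, …, a_n that is homogeneous of degree g and isobaric of weight p, then D(Δ(Δ A)) − Δ(Δ(D A)) = (2·((n·g : ℚ) − 2·p − 1)) • (Δ A). -/

import Mathlib

open MvPolynomial

/-- The weight function assigning weight `i` to the coefficient variable `aᵢ`. -/
def wt (n : ℕ) : Fin (n + 1) → ℕ := fun i => (i : ℕ)

/-- The lowering operator `D A = Σ_{i=0}^{n-1} (i+1) · aᵢ · ∂A/∂a_{i+1}`. -/
noncomputable def Dop (n : ℕ) (A : MvPolynomial (Fin (n + 1)) ℚ) :
    MvPolynomial (Fin (n + 1)) ℚ :=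
  ∑ i : Fin n, C ((i : ℕ) + 1 : ℚ) * X i.castSucc * pderiv i.succ A

/-- The raising operator `Δ A = Σ_{i=0}^{n-1} (n-i) · a_{i+1} · ∂A/∂aᵢ`. -/
noncomputable def Δop (n : ℕ) (A : MvPolynomial (Fin (n + 1)) ℚ) :
    MvPolynomial (Fin (n + 1)) ℚ :=
  ∑ i : Fin n, C ((n - (i : ℕ) : ℕ) : ℚ) * X i.succ * pderiv i.castSucc A

section Helpers

open Finsupp

lemma pderiv_comm' {σ : Type*} [DecidableEq σ] (i j : σ) (A : MvPolynomial σ ℚ) :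
    pderiv i (pderiv j A) = pderiv j (pderiv i A) := by
  induction A using MvPolynomial.induction_on' with
  | monomial s a =>
    simp only [pderiv_monomial]
    rcases eq_or_ne i j with rfl | hij
    · rfl
    · congr 1
      · rw [tsub_tsub, tsub_tsub, add_comm]
      · rw [Finsupp.tsub_apply, Finsupp.tsub_apply,
          Finsupp.single_apply, Finsupp.single_apply, if_neg hij, if_neg (Ne.symm hij)]
        push_cast [Nat.sub_zero]
        ring
  | add f g hf hg => simp [map_add, hf, hg]

lemma X_mul_pderiv_monomial {σ : Type*} (k : σ) (d : σ →₀ ℕ) (c : ℚ) :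
    X k * pderiv k (monomial d c) = (d k : ℚ) • monomial d c := by
  rw [pderiv_monomial]
  rcases Nat.eq_zero_or_pos (d k) with h | h
  · simp [h]
  · rw [← pow_one (X k), ← monomial_single_add,
      add_tsub_cancel_of_le (Finsupp.single_le_iff.mpr h)]
    rw [smul_monomial]
    congr 1
    rw [smul_eq_mul, mul_comm]

lemma euler {σ : Type*} [Fintype σ] [DecidableEq σ] (w : σ → ℕ) {p : ℕ}
    {A : MvPolynomial σ ℚ} (h : A.IsWeightedHomogeneous w p) :
    ∑ k, (w k : ℚ) • (X k * pderiv k A) = (p : ℚ) • A := by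
  calc ∑ k, (w k : ℚ) • (X k * pderiv k A)
      = ∑ k, ∑ d ∈ A.support, (w k : ℚ) • (X k * pderiv k (monomial d (coeff d A))) := by
        conv_lhs => rw [A.as_sum]
        simp only [map_sum, Finset.mul_sum, Finset.smul_sum]
    _ = ∑ d ∈ A.support, ∑ k, ((w k * d k : ℕ) : ℚ) • monomial d (coeff d A) := by
        rw [Finset.sum_comm]
        simp only [X_mul_pderiv_monomial, smul_smul]
        push_cast
        ring_nf
    _ = ∑ d ∈ A.support, ((weight w d : ℕ) : ℚ) • monomial d (coeff d A) := by
        refine Finset.sum_congr rfl fun d _ => ?_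
        rw [← Finset.sum_smul, ← Nat.cast_sum]
        congr 2
        rw [weight_apply, Finsupp.sum_fintype]
        · exact Finset.sum_congr rfl fun k _ => by rw [smul_eq_mul, mul_comm]
        · simp
    _ = (p : ℚ) • A := by
        conv_rhs => rw [A.as_sum]
        rw [Finset.smul_sum]
        refine Finset.sum_congr rfl fun d hd => ?_
        rw [h (MvPolynomial.mem_support_iff.mp hd)]

lemma weight_single_one {σ : Type*} (w : σ → ℕ) (j : σ) :
    weight w (Finsupp.single j 1) = w j := by
  rw [weight_apply, Finsupp.sum_single_index] <;> simp

lemma wh_X_mul_pderiv {σ : Type*} [DecidableEq σ] {w : σ → ℕ} {p q : ℕ}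
    {A : MvPolynomial σ ℚ} (i j : σ) (hq : q + w i = p + w j)
    (hA : A.IsWeightedHomogeneous w p) :
    (X j * pderiv i A).IsWeightedHomogeneous w q := by
  rw [← mem_weightedHomogeneousSubmodule ℚ]
  rw [A.as_sum, map_sum, Finset.mul_sum]
  refine Submodule.sum_mem _ fun d hd => ?_
  rw [pderiv_monomial, ← pow_one (X j), ← monomial_single_add]
  rw [mem_weightedHomogeneousSubmodule ℚ]
  rcases Nat.eq_zero_or_pos (d i) with h | h
  · simp only [h, Nat.cast_zero, mul_zero, monomial_zero]
    exact isWeightedHomogeneous_zero _ _ _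
  · apply isWeightedHomogeneous_monomial
    have h1 : weight w (d - Finsupp.single i 1) + w i = p := by
      rw [← weight_single_one w i, ← map_add,
        tsub_add_cancel_of_le (Finsupp.single_le_iff.mpr h),
        hA (MvPolynomial.mem_support_iff.mp hd)]
    rw [map_add, weight_single_one]
    omega

end Helpers

section Expansion

/-- The cross (second-order) term common to both compositions. -/
noncomputable def Sterm (n : ℕ) (A : MvPolynomial (Fin (n + 1)) ℚ) :
    MvPolynomial (Fin (n + 1)) ℚ :=
  ∑ i : Fin n, ∑ j : Fin n, (C ((i : ℕ) + 1 : ℚ) * C ((n - (j : ℕ) : ℕ) : ℚ)) *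
    (X i.castSucc * (X j.succ * pderiv i.succ (pderiv j.castSucc A)))

lemma DΔ_eq (n : ℕ) (A : MvPolynomial (Fin (n + 1)) ℚ) :
    Dop n (Δop n A) =
    (∑ i : Fin n, (C ((i : ℕ) + 1 : ℚ) * C ((n - (i : ℕ) : ℕ) : ℚ)) *
      (X i.castSucc * pderiv i.castSucc A)) + Sterm n A := by
  unfold Dop Δop Sterm
  simp only [map_sum, pderiv_mul, pderiv_C_mul, pderiv_X, Pi.single_apply, Fin.succ_inj,
    Finset.mul_sum, mul_ite, ite_mul, mul_one, mul_zero, zero_mul, one_mul, mul_add,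
    Finset.sum_add_distrib, pderiv_C, zero_add, add_zero,
    Finset.sum_ite_eq, Finset.sum_ite_eq', Finset.mem_univ, if_true]
  rw [← Finset.sum_add_distrib, ← Finset.sum_add_distrib]
  refine Finset.sum_congr rfl fun i _ => ?_
  refine congrArg₂ (· + ·) ?_ ?_
  · ring
  · exact Finset.sum_congr rfl fun j _ => by ring

lemma ΔD_eq (n : ℕ) (A : MvPolynomial (Fin (n + 1)) ℚ) :
    Δop n (Dop n A) =
    (∑ i : Fin n, (C ((i : ℕ) + 1 : ℚ) * C ((n - (i : ℕ) : ℕ) : ℚ)) *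
      (X i.succ * pderiv i.succ A)) + Sterm n A := by
  unfold Dop Δop Sterm
  simp only [map_sum, pderiv_mul, pderiv_C_mul, pderiv_X, Pi.single_apply, Fin.castSucc_inj,
    Finset.mul_sum, mul_ite, ite_mul, mul_one, mul_zero, zero_mul, one_mul, mul_add,
    Finset.sum_add_distrib, pderiv_C, zero_add, add_zero,
    Finset.sum_ite_eq, Finset.sum_ite_eq', Finset.mem_univ, if_true]
  refine congrArg₂ (· + ·) ?_ ?_
  · exact Finset.sum_congr rfl fun i _ => by ring
  · rw [Finset.sum_comm]
    refine Finset.sum_congr rfl fun i _ => Finset.sum_congr rfl fun j _ => ?_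
    rw [pderiv_comm']
    ring

lemma comm_eq (n : ℕ) (A : MvPolynomial (Fin (n + 1)) ℚ) :
    Dop n (Δop n A) - Δop n (Dop n A)
      = ∑ k : Fin (n + 1), ((n : ℚ) - 2 * ((k : ℕ) : ℚ)) • (X k * pderiv k A) := by
  rw [DΔ_eq, ΔD_eq, add_sub_add_right_eq_sub]
  have h1 : (∑ i : Fin n, (C ((i : ℕ) + 1 : ℚ) * C ((n - (i : ℕ) : ℕ) : ℚ)) *
        (X i.castSucc * pderiv i.castSucc A))
      = ∑ k : Fin (n + 1), ((((k : ℕ) : ℚ) + 1) * ((n : ℚ) - ((k : ℕ) : ℚ))) •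
        (X k * pderiv k A) := by
    rw [Fin.sum_univ_castSucc]
    simp only [Fin.coe_castSucc, Fin.val_last, sub_self, mul_zero, zero_smul, add_zero]
    refine Finset.sum_congr rfl fun i _ => ?_
    rw [← C_mul, C_mul', Nat.cast_sub (le_of_lt i.2)]
  have h2 : (∑ i : Fin n, (C ((i : ℕ) + 1 : ℚ) * C ((n - (i : ℕ) : ℕ) : ℚ)) *
        (X i.succ * pderiv i.succ A))
      = ∑ k : Fin (n + 1), (((k : ℕ) : ℚ) * ((n : ℚ) - ((k : ℕ) : ℚ) + 1)) •
        (X k * pderiv k A) := by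
    rw [Fin.sum_univ_succ]
    simp only [Fin.val_succ, Fin.val_zero, Nat.cast_zero, zero_mul, zero_smul, zero_add]
    refine Finset.sum_congr rfl fun i _ => ?_
    rw [← C_mul, C_mul', Nat.cast_sub (le_of_lt i.2)]
    congr 1
    push_cast
    ring
  rw [h1, h2, ← Finset.sum_sub_distrib]
  refine Finset.sum_congr rfl fun k _ => ?_
  rw [← sub_smul]
  congr 1
  ring

end Expansion

section Assembly

lemma Δop_smul (n : ℕ) (r : ℚ) (A : MvPolynomial (Fin (n + 1)) ℚ) :
    Δop n (r • A) = r • Δop n A := by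
  unfold Δop
  rw [Finset.smul_sum]
  refine Finset.sum_congr rfl fun i _ => ?_
  rw [(pderiv i.castSucc).map_smul, mul_smul_comm]

lemma Δop_sub (n : ℕ) (A B : MvPolynomial (Fin (n + 1)) ℚ) :
    Δop n (A - B) = Δop n A - Δop n B := by
  unfold Δop
  rw [← Finset.sum_sub_distrib]
  refine Finset.sum_congr rfl fun i _ => ?_
  rw [map_sub, mul_sub]

lemma Δop_wh (n : ℕ) {w : Fin (n + 1) → ℕ} {p q : ℕ} {A : MvPolynomial (Fin (n + 1)) ℚ}
    (h : ∀ i : Fin n, q + w i.castSucc = p + w i.succ)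
    (hA : A.IsWeightedHomogeneous w p) : (Δop n A).IsWeightedHomogeneous w q := by
  rw [← mem_weightedHomogeneousSubmodule ℚ]
  unfold Δop
  refine Submodule.sum_mem _ fun i _ => ?_
  rw [mul_assoc, C_mul']
  exact Submodule.smul_mem _ _ ((mem_weightedHomogeneousSubmodule ℚ _ _ _).mpr
    (wh_X_mul_pderiv _ _ (h i) hA))

lemma comm_val (n g p : ℕ) (A : MvPolynomial (Fin (n + 1)) ℚ)
    (hg : A.IsHomogeneous g) (hp : A.IsWeightedHomogeneous (wt n) p) :
    Dop n (Δop n A) - Δop n (Dop n A) = ((n : ℚ) * (g : ℚ) - 2 * (p : ℚ)) • A := by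
  rw [comm_eq]
  have e1 := euler (1 : Fin (n + 1) → ℕ) hg
  have e2 := euler (wt n) hp
  simp only [Pi.one_apply, Nat.cast_one, one_smul] at e1
  simp only [wt] at e2
  calc ∑ k : Fin (n + 1), ((n : ℚ) - 2 * ((k : ℕ) : ℚ)) • (X k * pderiv k A)
      = (n : ℚ) • ∑ k : Fin (n + 1), (X k * pderiv k A)
        - (2 : ℚ) • ∑ k : Fin (n + 1), ((k : ℕ) : ℚ) • (X k * pderiv k A) := by
        rw [Finset.smul_sum, Finset.smul_sum, ← Finset.sum_sub_distrib]
        refine Finset.sum_congr rfl fun k _ => ?_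
        rw [smul_smul, ← sub_smul]
    _ = ((n : ℚ) * (g : ℚ) - 2 * (p : ℚ)) • A := by
        rw [e1, e2, smul_smul, smul_smul, ← sub_smul]

end Assembly

/-- If `A` is homogeneous of degree `g` and isobaric of weight `p`, then
`DΔ² A − Δ²D A = 2·(n·g − 2·p − 1) • Δ A`. -/
theorem Dop_Δop_sq_comm (n g p : ℕ) (A : MvPolynomial (Fin (n + 1)) ℚ)
    (hg : A.IsHomogeneous g) (hp : A.IsWeightedHomogeneous (wt n) p) :
    Dop n (Δop n (Δop n A)) - Δop n (Δop n (Dop n A)) =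
      (2 * (((n * g : ℕ) : ℚ) - 2 * (p : ℚ) - 1)) • Δop n A := by
  have hΔg : (Δop n A).IsHomogeneous g :=
    Δop_wh n (fun i => rfl) hg
  have hΔp : (Δop n A).IsWeightedHomogeneous (wt n) (p + 1) := by
    refine Δop_wh n (fun i => ?_) hp
    simp only [wt, Fin.coe_castSucc, Fin.val_succ]
    omega
  have E1 := comm_val n g (p + 1) (Δop n A) hΔg hΔp
  have E2 := comm_val n g p A hg hp
  calc Dop n (Δop n (Δop n A)) - Δop n (Δop n (Dop n A))
      = (Dop n (Δop n (Δop n A)) - Δop n (Dop n (Δop n A)))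
        + Δop n (Dop n (Δop n A) - Δop n (Dop n A)) := by
        rw [Δop_sub]; abel
    _ = ((n : ℚ) * (g : ℚ) - 2 * ((p + 1 : ℕ) : ℚ)) • Δop n A
        + ((n : ℚ) * (g : ℚ) - 2 * (p : ℚ)) • Δop n A := by
        rw [E1, E2, Δop_smul]
    _ = (2 * (((n * g : ℕ) : ℚ) - 2 * (p : ℚ) - 1)) • Δop n A := by
        rw [← add_smul]
        congr 1
        push_cast
        ring
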